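/- Fourier coefficients of the cycling profile (Proposition 5.4). For every L > 0 and every q ∈ ℤ, ∫_{−∞}^{∞} A(Lx) e^{2πiqx} dx = (1/(2L)) · 2^{−πiq/L} · Γ(1 − πiq/L), where 2^{−πiq/L} = exp(−(πiq/L) log 2) and Γ is the complex Gamma function. Consequently, the 1-periodic function P(x) = Σ_{ℓ∈ℤ} A(L(ℓ−x)) has Fourier coefficients P̂(q) = ∫_0^1 P(x) e^{−2πiqx} dx = (1/(2L)) · 2^{−πiq/L} · Γ(1 − πiq/L) for every q ∈ ℤ. -/

import Mathlib

open MeasureTheory intervalIntegral Real Complex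

/-- Fourier coefficients of the cycling profile (Proposition 5.4). -/
theorem cycling_profile_fourier
    (L : ℝ) (hL : 0 < L)
    (A : ℝ → ℝ)
    (hA : ∀ x, A x = 1/2 * Real.exp (-2 * x) * Real.exp (-(1/2) * Real.exp (-2 * x)))
    (P : ℝ → ℝ)
    (hP : ∀ x, P x = ∑' l : ℤ, A (L * ((l : ℝ) - x)))
    (q : ℤ) :
    (∫ x : ℝ, (A (L * x) : ℂ) * Complex.exp (2 * (Real.pi : ℂ) * Complex.I * (q : ℂ) * (x : ℂ)))
      = 1 / (2 * (L : ℂ))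
        * Complex.exp (-((Real.pi : ℂ) * Complex.I * (q : ℂ) / (L : ℂ)) * (Real.log 2 : ℂ))
        * Complex.Gamma (1 - (Real.pi : ℂ) * Complex.I * (q : ℂ) / (L : ℂ))
    ∧ (∫ x in (0:ℝ)..1, (P x : ℂ) * Complex.exp (-(2 * (Real.pi : ℂ) * Complex.I * (q : ℂ) * (x : ℂ))))
      = 1 / (2 * (L : ℂ))
        * Complex.exp (-((Real.pi : ℂ) * Complex.I * (q : ℂ) / (L : ℂ)) * (Real.log 2 : ℂ))
        * Complex.Gamma (1 - (Real.pi : ℂ) * Complex.I * (q : ℂ) / (L : ℂ)) := by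
  open Set in
  -- Part 1
  have part1 : (∫ x : ℝ, (A (L * x) : ℂ) * Complex.exp (2 * (Real.pi : ℂ) * Complex.I * (q : ℂ) * (x : ℂ)))
      = 1 / (2 * (L : ℂ))
        * Complex.exp (-((Real.pi : ℂ) * Complex.I * (q : ℂ) / (L : ℂ)) * (Real.log 2 : ℂ))
        * Complex.Gamma (1 - (Real.pi : ℂ) * Complex.I * (q : ℂ) / (L : ℂ)) := by
    set w : ℂ := (Real.pi : ℂ) * Complex.I * (q : ℂ) / (L : ℂ) with hw
    have hwre : (1 - w).re = 1 := by
      simp [hw, Complex.div_re, Complex.sub_re, Complex.one_re]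
    set φ : ℝ → ℝ := fun x => 1/2 * Real.exp (-(2*L) * x) with hφ
    have hφpos : ∀ x, 0 < φ x := fun x => by positivity
    have hd : ∀ x ∈ (univ : Set ℝ), HasDerivWithinAt φ (-L * Real.exp (-(2*L)*x)) univ x := by
      intro x _
      have h1 : HasDerivAt (fun x : ℝ => -(2*L) * x) (-(2*L)) x := by
        simpa using (hasDerivAt_id x).const_mul (-(2*L))
      have h2 := (Real.hasDerivAt_exp (-(2*L)*x)).comp x h1
      have h3 := h2.const_mul (1/2 : ℝ)
      rw [show (1/2 : ℝ) * (Real.exp (-(2*L)*x) * -(2*L)) = -L * Real.exp (-(2*L)*x) by ring] at h3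
      exact h3.hasDerivWithinAt
    have hinj : InjOn φ (univ : Set ℝ) := by
      intro a _ b _ h
      simp only [hφ] at h
      have h2 : Real.exp (-(2*L)*a) = Real.exp (-(2*L)*b) := by linarith
      have h3 := Real.exp_injective h2
      exact mul_left_cancel₀ (neg_ne_zero.mpr (by positivity : (2*L) ≠ 0)) h3
    have himg : φ '' (univ : Set ℝ) = Ioi (0:ℝ) := by
      ext t
      simp only [image_univ, mem_range, mem_Ioi]
      constructor
      · rintro ⟨x, rfl⟩; exact hφpos x
      · intro ht
        refine ⟨-(Real.log (2*t))/(2*L), ?_⟩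
        have : -(2*L) * (-(Real.log (2*t))/(2*L)) = Real.log (2*t) := by
          field_simp
        rw [hφ]; dsimp only
        rw [this, Real.exp_log (by linarith)]
        ring
    have hsub := integral_image_eq_integral_abs_deriv_smul MeasurableSet.univ hd hinj
        (fun t : ℝ => (Real.exp (-t) : ℂ) * (t:ℂ) ^ (-w))
    rw [himg] at hsub
    have hGamma : Complex.Gamma (1 - w) = ∫ t in Ioi (0:ℝ), (Real.exp (-t) : ℂ) * (t:ℂ) ^ (-w) := by
      rw [Complex.Gamma_eq_integral (by rw [hwre]; norm_num), Complex.GammaIntegral]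
      congr 1; ext t; congr 2; ring
    rw [hsub, setIntegral_univ] at hGamma
    have hLC : (L:ℂ) ≠ 0 := Complex.ofReal_ne_zero.mpr hL.ne'
    have hAφ : ∀ x, A (L*x) = φ x * Real.exp (-(φ x)) := by
      intro x; rw [hA, hφ]; dsimp only; ring_nf
    have hlog : ∀ x : ℝ, Real.log (φ x) = -Real.log 2 + (-(2*L)*x) := by
      intro x
      rw [hφ]; dsimp only
      rw [Real.log_mul (by norm_num) (Real.exp_ne_zero _), Real.log_exp, one_div, Real.log_inv]
    have hexp : ∀ x : ℝ, Complex.exp ((↑(-Real.log 2 + (-(2*L)*x)) : ℂ) * (-w))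
        = Complex.exp (w * (Real.log 2 : ℂ)) * Complex.exp (2*(Real.pi:ℂ)*Complex.I*(q:ℂ)*(x:ℂ)) := by
      intro x; rw [← Complex.exp_add]; congr 1
      push_cast
      rw [hw]; field_simp; ring
    have hpt : ∀ x : ℝ, |(-L) * Real.exp (-(2*L)*x)| • ((Real.exp (-(φ x)) : ℂ) * (φ x : ℂ) ^ (-w))
        = (2*(L:ℂ)) * Complex.exp (w * (Real.log 2 : ℂ))
          * ((A (L*x) : ℂ) * Complex.exp (2*(Real.pi:ℂ)*Complex.I*(q:ℂ)*(x:ℂ))) := by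
      intro x
      have habs : |(-L) * Real.exp (-(2*L)*x)| = L * Real.exp (-(2*L)*x) := by
        rw [abs_mul, abs_neg, abs_of_pos hL, abs_of_pos (Real.exp_pos _)]
      rw [habs, Complex.cpow_def_of_ne_zero (Complex.ofReal_ne_zero.mpr (hφpos x).ne'),
        ← Complex.ofReal_log (hφpos x).le, hlog, hexp, hAφ, Complex.real_smul]
      have hφx : φ x = 1/2 * Real.exp (-(2*L)*x) := rfl
      rw [hφx]
      push_cast
      ring
    simp_rw [hpt] at hGamma
    rw [MeasureTheory.integral_const_mul] at hGamma
    rw [hGamma]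
    have hexpne := Complex.exp_ne_zero (w * (Real.log 2 : ℂ))
    have h2L : (2*(L:ℂ)) ≠ 0 := by simp [hLC]
    have : -w * (Real.log 2 : ℂ) = -(w * (Real.log 2 : ℂ)) := by ring
    rw [this, Complex.exp_neg]
    field_simp
  refine ⟨part1, ?_⟩
  -- Part 2
  set F : ℝ → ℂ := fun x => (A (L * x) : ℂ) * Complex.exp (2 * (Real.pi : ℂ) * Complex.I * (q : ℂ) * (x : ℂ)) with hF
  have hAc : Continuous A := by
    have : A = fun x => 1/2 * Real.exp (-2 * x) * Real.exp (-(1/2) * Real.exp (-2 * x)) :=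
      funext hA
    rw [this]; fun_prop
  have hA0 : ∀ y, 0 ≤ A y := by
    intro y; rw [hA]; positivity
  -- global bound  A y ≤ 8 exp (-2|y|)
  have hbd : ∀ y : ℝ, A y ≤ 8 * Real.exp (-(2*|y|)) := by
    intro y
    rw [hA]
    set u : ℝ := Real.exp (-2 * y) with hu
    have hu0 : 0 < u := Real.exp_pos _
    have hE0 : 0 < Real.exp (-(1/2) * u) := Real.exp_pos _
    rcases le_or_gt 0 y with hy | hy
    · rw [_root_.abs_of_nonneg hy]
      have h1 : Real.exp (-(1/2)*u) ≤ Real.exp 0 := Real.exp_le_exp.mpr (by nlinarith)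
      rw [Real.exp_zero] at h1
      have h2 : Real.exp (-(2*y)) = u := by rw [hu]; congr 1; ring
      rw [h2]
      nlinarith
    · rw [_root_.abs_of_neg hy]
      have h2 : Real.exp (-(2 * -y)) = u⁻¹ := by
        rw [hu, ← Real.exp_neg]; congr 1; ring
      rw [h2]
      have h3 : u / 4 ≤ Real.exp (u/4) := by
        nlinarith [Real.add_one_le_exp (u/4)]
      have h4 : u ^ 2 ≤ 16 * Real.exp (u/2) := by
        have : Real.exp (u/4) * Real.exp (u/4) = Real.exp (u/2) := by
          rw [← Real.exp_add]; congr 1; ring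
        nlinarith [Real.exp_pos (u/4)]
      have h5 : Real.exp (-(1/2) * u) * Real.exp (u/2) = 1 := by
        rw [← Real.exp_add, show -(1/2) * u + u/2 = 0 by ring, Real.exp_zero]
      rw [show (8:ℝ) * u⁻¹ = 8 / u by ring, le_div_iff₀ hu0]
      nlinarith [h4, h5, hE0, Real.exp_pos (u/2)]
  have hcast : ∀ n : ℤ, ((n.natAbs : ℝ)) = |(n : ℝ)| := fun n => by
    simp [Nat.cast_natAbs, Int.cast_abs]
  have key : ∀ (n : ℤ) (t : ℝ), (n.natAbs : ℝ) - 1 ≤ |t| →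
      A (L * t) ≤ 8 * Real.exp (2*L) * Real.exp (-(2*L)) ^ n.natAbs := by
    intro n t h
    have h1 : A (L*t) ≤ 8 * Real.exp (-(2*L) * |t|) := by
      have h0 := hbd (L*t)
      rwa [abs_mul, _root_.abs_of_pos hL, show -(2*(L*|t|)) = -(2*L)*|t| by ring] at h0
    refine h1.trans ?_
    have h2 : Real.exp (-(2*L) * |t|) ≤ Real.exp (-(2*L) * ((n.natAbs:ℝ) - 1)) := by
      apply Real.exp_le_exp.mpr
      nlinarith
    have h3 : Real.exp (-(2*L)) ^ (n.natAbs) = Real.exp ((n.natAbs : ℝ) * (-(2*L))) :=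
      (Real.exp_nat_mul _ _).symm
    calc 8 * Real.exp (-(2*L)*|t|) ≤ 8 * Real.exp (-(2*L) * ((n.natAbs:ℝ)-1)) := by linarith
      _ = 8 * Real.exp (2*L) * Real.exp (-(2*L)) ^ n.natAbs := by
          rw [h3, mul_assoc, ← Real.exp_add]
          congr 2
          ring
  have hρ1 : Real.exp (-(2*L)) < 1 := by
    rw [Real.exp_lt_one_iff]
    linarith
  have hsumZ : Summable (fun n : ℤ => 8 * Real.exp (2*L) * Real.exp (-(2*L)) ^ n.natAbs) := by
    apply Summable.mul_left
    apply Summable.of_nat_of_neg <;>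
      simpa using summable_geometric_of_lt_one (Real.exp_nonneg _) hρ1
  have habs1 : ∀ (n : ℤ) (x : ℝ), |x| ≤ 1 → (n.natAbs : ℝ) - 1 ≤ |(n:ℝ) - x| := by
    intro n x hx
    have h := abs_sub_abs_le_abs_sub ((n:ℝ)) x
    rw [hcast n]
    linarith
  have habs2 : ∀ (n : ℤ) (x : ℝ), |x| ≤ 1 → (n.natAbs : ℝ) - 1 ≤ |x + (n:ℝ)| := by
    intro n x hx
    have h := abs_sub_abs_le_abs_sub ((n:ℝ)) (-x)
    rw [abs_neg, show (n:ℝ) - -x = x + n by ring] at h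
    rw [hcast n]
    linarith
  have hcont : ∀ n : ℤ, Continuous (fun x : ℝ => (A (L * ((n:ℝ) - x)) : ℂ)
      * Complex.exp (-(2 * (Real.pi:ℂ) * Complex.I * (q:ℂ) * (x:ℂ)))) := by
    intro n
    apply Continuous.mul
    · exact Complex.continuous_ofReal.comp
        (hAc.comp (continuous_const.mul (continuous_const.sub continuous_id)))
    · exact Complex.continuous_exp.comp
        ((continuous_const.mul Complex.continuous_ofReal).neg)
  set cf : ℤ → C(ℝ, ℂ) := fun n => ⟨_, hcont n⟩ with hcf
  have hnorm : ∀ (y : ℝ) (z : ℂ), z.re = 0 → ‖(y : ℂ) * Complex.exp z‖ = |y| := by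
    intro y z hz
    rw [norm_mul, Complex.norm_real, Real.norm_eq_abs,
      Complex.norm_exp, hz, Real.exp_zero, mul_one]
  have hre : ∀ x : ℝ, (-(2 * (Real.pi:ℂ) * Complex.I * (q:ℂ) * (x:ℂ))).re = 0 := by
    intro x; simp
  have hre' : ∀ x : ℝ, (2 * (Real.pi:ℂ) * Complex.I * (q:ℂ) * (x:ℂ)).re = 0 := by
    intro x; simp
  have hIcc : Set.uIcc (0:ℝ) 1 = Set.Icc 0 1 := Set.uIcc_of_le zero_le_one
  have hsumnorm : Summable (fun n : ℤ =>
      ‖(cf n).restrict (⟨Set.uIcc 0 1, isCompact_uIcc⟩ : TopologicalSpace.Compacts ℝ)‖) := by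
    apply Summable.of_nonneg_of_le (fun n => norm_nonneg _) ?_ hsumZ
    intro n
    apply (ContinuousMap.norm_le _ (by positivity)).mpr
    rintro ⟨x, hx⟩
    rw [ContinuousMap.restrict_apply]
    show ‖(A (L * ((n:ℝ) - x)) : ℂ) * Complex.exp (-(2 * (Real.pi:ℂ) * Complex.I * (q:ℂ) * (x:ℂ)))‖ ≤ _
    rw [hnorm _ _ (hre x), _root_.abs_of_nonneg (hA0 _)]
    have hx1 : x ∈ Set.Icc (0:ℝ) 1 := hIcc ▸ (hx : x ∈ Set.uIcc (0:ℝ) 1)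
    exact key n _ (habs1 n x (abs_le.mpr ⟨by linarith [hx1.1], hx1.2⟩))
  have hinteq : ∀ x : ℝ, (P x : ℂ) * Complex.exp (-(2 * (Real.pi:ℂ) * Complex.I * (q:ℂ) * (x:ℂ)))
      = ∑' n : ℤ, cf n x := by
    intro x
    rw [hP, Complex.ofReal_tsum, ← tsum_mul_right]
    rfl
  have step1 : (∫ x in (0:ℝ)..1, (P x : ℂ) * Complex.exp (-(2 * (Real.pi:ℂ) * Complex.I * (q:ℂ) * (x:ℂ))))
      = ∫ x in (0:ℝ)..1, ∑' n : ℤ, cf n x := by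
    apply intervalIntegral.integral_congr
    intro x _
    exact hinteq x
  have step2 : (∫ x in (0:ℝ)..1, ∑' n : ℤ, cf n x) = ∑' n : ℤ, ∫ x in (0:ℝ)..1, cf n x :=
    (intervalIntegral.tsum_intervalIntegral_eq_of_summable_norm hsumnorm).symm
  have step3 : ∀ n : ℤ, (∫ x in (0:ℝ)..1, cf n x) = ∫ x in (0:ℝ)..1, F (x + ((n:ℝ) - 1)) := by
    intro n
    have h1 : ∀ x : ℝ, cf n x = F ((n:ℝ) - x) := by
      intro x
      show (A (L * ((n:ℝ) - x)) : ℂ) * Complex.exp (-(2 * (Real.pi:ℂ) * Complex.I * (q:ℂ) * (x:ℂ)))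
        = (A (L * (((n:ℝ) - x))) : ℂ)
          * Complex.exp (2 * (Real.pi:ℂ) * Complex.I * (q:ℂ) * ((((n:ℝ) - x) : ℝ) : ℂ))
      congr 1
      rw [show (2 * (Real.pi:ℂ) * Complex.I * (q:ℂ) * ((((n:ℝ) - x) : ℝ) : ℂ))
          = (q * n : ℤ) * (2*(Real.pi:ℂ)*Complex.I) + (-(2 * (Real.pi:ℂ) * Complex.I * (q:ℂ) * (x:ℂ)))
        by push_cast; ring]
      rw [Complex.exp_add, Complex.exp_int_mul_two_pi_mul_I, one_mul]
    simp_rw [h1]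
    rw [intervalIntegral.integral_comp_sub_left (fun y => F y) ((n:ℝ)),
      intervalIntegral.integral_comp_add_right (fun y => F y) ((n:ℝ) - 1)]
    congr 1 <;> ring
  have hFcont : Continuous F := by
    rw [hF]
    exact (Complex.continuous_ofReal.comp (hAc.comp (continuous_const.mul continuous_id))).mul
      (Complex.continuous_exp.comp (continuous_const.mul Complex.continuous_ofReal))
  have hFint : Integrable F := by
    have hsum2 : Summable (fun n : ℤ =>
        ‖((⟨F, hFcont⟩ : C(ℝ, ℂ)).comp (ContinuousMap.addRight (n:ℝ))).restrict (Set.Icc 0 1)‖) := by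
      apply Summable.of_nonneg_of_le (fun n => norm_nonneg _) ?_ hsumZ
      intro n
      apply (ContinuousMap.norm_le _ (by positivity)).mpr
      rintro ⟨x, hx⟩
      rw [ContinuousMap.restrict_apply]
      show ‖F (x + (n:ℝ))‖ ≤ _
      rw [hF]
      show ‖(A (L * (x + (n:ℝ))) : ℂ) * Complex.exp (2 * (Real.pi:ℂ) * Complex.I * (q:ℂ) * ((x + (n:ℝ) : ℝ):ℂ))‖ ≤ _
      rw [hnorm _ _ (hre' _), _root_.abs_of_nonneg (hA0 _)]
      exact key n _ (habs2 n x (abs_le.mpr ⟨by linarith [hx.1], hx.2⟩))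
    exact Real.integrable_of_summable_norm_Icc hsum2
  have step5 : ∑' n : ℤ, (∫ x in (0:ℝ)..1, F (x + ((n:ℝ) - 1))) = ∫ x : ℝ, F x := by
    rw [← hFint.hasSum_intervalIntegral_comp_add_int.tsum_eq,
      ← ((Equiv.subRight (1:ℤ)).tsum_eq (fun n : ℤ => ∫ x in (0:ℝ)..1, F (x + (n:ℝ))))]
    apply tsum_congr
    intro n
    simp only [Equiv.subRight_apply, Int.cast_sub, Int.cast_one]
  rw [step1, step2]
  rw [tsum_congr step3, step5]
  exact part1
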